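/- Let Θ = U D V^T be an SVD with U, V having orthonormal columns, and let P_T be the associated tangent-space projection. Then for every matrix M ∈ ℝ^{d1×d2}: ‖M‖_N ≥ ‖(I − P_T)M‖_N + ⟨U V^T, M⟩. -/

import Mathlib

open Matrix

noncomputable def frobNorm {m n : ℕ} (M : Matrix (Fin m) (Fin n) ℝ) : ℝ :=
  Real.sqrt (Matrix.trace (Mᵀ * M))

noncomputable def nuclearNorm {m n : ℕ} (M : Matrix (Fin m) (Fin n) ℝ) : ℝ :=
  ∑ i, Real.sqrt ((show (Mᵀ * M).IsHermitian by simpa using Matrix.isHermitian_conjTranspose_mul_self M).eigenvalues i)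

noncomputable def matSpectralNorm {m n : ℕ} (M : Matrix (Fin m) (Fin n) ℝ) : ℝ :=
  ⨆ i, Real.sqrt ((show (Mᵀ * M).IsHermitian by simpa using Matrix.isHermitian_conjTranspose_mul_self M).eigenvalues i)

noncomputable def mip {m n : ℕ} (A B : Matrix (Fin m) (Fin n) ℝ) : ℝ :=
  Matrix.trace (Aᵀ * B)

namespace Stmt14Aux

variable {m n : ℕ}

/-- Orthogonal eigenvector matrix of `Mᵀ * M`. -/
noncomputable def Qm (M : Matrix (Fin m) (Fin n) ℝ) : Matrix (Fin n) (Fin n) ℝ :=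
  ((show (Mᵀ * M).IsHermitian by simpa using Matrix.isHermitian_conjTranspose_mul_self M).eigenvectorUnitary : Matrix (Fin n) (Fin n) ℝ)

/-- Eigenvalues of `Mᵀ * M`. -/
noncomputable def μm (M : Matrix (Fin m) (Fin n) ℝ) : Fin n → ℝ :=
  (show (Mᵀ * M).IsHermitian by simpa using Matrix.isHermitian_conjTranspose_mul_self M).eigenvalues

lemma Q_orth (M : Matrix (Fin m) (Fin n) ℝ) : (Qm M)ᵀ * Qm M = 1 := by
  have := (Matrix.mem_unitaryGroup_iff').mp
    (show (Mᵀ * M).IsHermitian by simpa using Matrix.isHermitian_conjTranspose_mul_self M).eigenvectorUnitary.2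
  simpa [Qm, Matrix.star_eq_conjTranspose, conjTranspose_eq_transpose_of_trivial] using this

lemma Q_orth' (M : Matrix (Fin m) (Fin n) ℝ) : Qm M * (Qm M)ᵀ = 1 := by
  have := (Matrix.mem_unitaryGroup_iff).mp
    (show (Mᵀ * M).IsHermitian by simpa using Matrix.isHermitian_conjTranspose_mul_self M).eigenvectorUnitary.2
  simpa [Qm, Matrix.star_eq_conjTranspose, conjTranspose_eq_transpose_of_trivial] using this

lemma spec (M : Matrix (Fin m) (Fin n) ℝ) :
    Mᵀ * M = Qm M * diagonal (μm M) * (Qm M)ᵀ := by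
  have := (show (Mᵀ * M).IsHermitian by simpa using Matrix.isHermitian_conjTranspose_mul_self M).spectral_theorem
  simpa [Qm, μm, Matrix.star_eq_conjTranspose, conjTranspose_eq_transpose_of_trivial,
    Function.comp] using this

lemma μ_nonneg (M : Matrix (Fin m) (Fin n) ℝ) (i : Fin n) : 0 ≤ μm M i :=
  Matrix.PosSemidef.eigenvalues_nonneg (A := Mᵀ * M)
    (by simpa using Matrix.posSemidef_conjTranspose_mul_self M) i

lemma nuclear_eq (M : Matrix (Fin m) (Fin n) ℝ) :
    nuclearNorm M = ∑ i, Real.sqrt (μm M i) := rfl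

/-- Sandwich multiplication rule: `(Q dₐ Qᵀ)(Q d_b Qᵀ) = Q d_{ab} Qᵀ`. -/
lemma sandwich (M : Matrix (Fin m) (Fin n) ℝ) (a b : Fin n → ℝ) :
    (Qm M * diagonal a * (Qm M)ᵀ) * (Qm M * diagonal b * (Qm M)ᵀ)
      = Qm M * diagonal (fun i => a i * b i) * (Qm M)ᵀ := by
  have h1 : (Qm M)ᵀ * Qm M = 1 := Q_orth M
  calc (Qm M * diagonal a * (Qm M)ᵀ) * (Qm M * diagonal b * (Qm M)ᵀ)
      = Qm M * diagonal a * ((Qm M)ᵀ * Qm M) * diagonal b * (Qm M)ᵀ := by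
        simp only [Matrix.mul_assoc]
    _ = Qm M * (diagonal a * diagonal b) * (Qm M)ᵀ := by
        rw [h1, Matrix.mul_one, Matrix.mul_assoc (Qm M)]
    _ = Qm M * diagonal (fun i => a i * b i) * (Qm M)ᵀ := by
        rw [Matrix.diagonal_mul_diagonal]

/-- The dual bound: if `1 - ZᵀZ` is PSD then `tr(ZᵀM) ≤ ‖M‖_N`. -/
lemma dual_bound (Z M : Matrix (Fin m) (Fin n) ℝ) (hZ : (1 - Zᵀ * Z).PosSemidef) :
    Matrix.trace (Zᵀ * M) ≤ nuclearNorm M := by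
  set Q := Qm M with hQdef
  have hQ1 : Qᵀ * Q = 1 := Q_orth M
  have hQ2 : Q * Qᵀ = 1 := Q_orth' M
  have t1 : Matrix.trace (Zᵀ * M) = Matrix.trace ((Z * Q)ᵀ * (M * Q)) := by
    rw [transpose_mul]
    have e : Qᵀ * Zᵀ * (M * Q) = Qᵀ * (Zᵀ * M) * Q := by simp only [Matrix.mul_assoc]
    rw [e, Matrix.trace_mul_cycle, ← Matrix.mul_assoc, hQ2, Matrix.one_mul]
  have col_M : ∀ i, ∑ k, (M * Q) k i ^ 2 = μm M i := by
    intro i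
    have hMQ : (M * Q)ᵀ * (M * Q) = diagonal (μm M) := by
      rw [transpose_mul]
      calc Qᵀ * Mᵀ * (M * Q) = Qᵀ * (Mᵀ * M) * Q := by simp only [Matrix.mul_assoc]
        _ = Qᵀ * (Q * diagonal (μm M) * Qᵀ) * Q := by rw [spec M]
        _ = (Qᵀ * Q) * diagonal (μm M) * (Qᵀ * Q) := by simp only [Matrix.mul_assoc]
        _ = diagonal (μm M) := by rw [hQ1, Matrix.one_mul, Matrix.mul_one]
    have := congrArg (fun X => X i i) hMQ
    simpa [Matrix.mul_apply, Matrix.transpose_apply, sq, Matrix.diagonal_apply_eq,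
      mul_comm] using this
  have col_Z : ∀ i, ∑ k, (Z * Q) k i ^ 2 ≤ 1 := by
    intro i
    have hpsd : (Qᵀ * (1 - Zᵀ * Z) * Q).PosSemidef := by
      have := hZ.conjTranspose_mul_mul_same Q
      simpa [conjTranspose_eq_transpose_of_trivial] using this
    have hexp : Qᵀ * (1 - Zᵀ * Z) * Q = 1 - (Z * Q)ᵀ * (Z * Q) := by
      rw [Matrix.mul_sub, Matrix.sub_mul, Matrix.mul_one, hQ1, transpose_mul]
      simp only [Matrix.mul_assoc]
    rw [hexp] at hpsd
    have hdiag := hpsd.dotProduct_mulVec_nonneg (Pi.single i 1)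
    have h1 : ((Z * Q)ᵀ * (Z * Q)) i i = ∑ k, (Z * Q) k i ^ 2 := by
      simp [Matrix.mul_apply, Matrix.transpose_apply, sq, mul_comm]
    simp only [Matrix.sub_mulVec, Matrix.one_mulVec, dotProduct_sub,
      Pi.star_apply, star_trivial] at hdiag
    have hdiag2 : 0 ≤ 1 - ((Z * Q)ᵀ * (Z * Q)) i i := by
      have e1 : Pi.single (M := fun _ : Fin n => ℝ) i 1 ⬝ᵥ Pi.single i 1 = (1 : ℝ) := by
        simp [dotProduct, Pi.single_apply]
      have e2 : Pi.single (M := fun _ : Fin n => ℝ) i 1 ⬝ᵥ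
          (((Z * Q)ᵀ * (Z * Q)) *ᵥ Pi.single i 1) = ((Z * Q)ᵀ * (Z * Q)) i i := by
        simp [Matrix.mulVec_single, dotProduct, Pi.single_apply]
      simpa [e1, e2] using hdiag
    rw [h1] at hdiag2
    linarith
  rw [t1, nuclear_eq]
  have ttr : Matrix.trace ((Z * Q)ᵀ * (M * Q)) = ∑ i, ∑ k, (Z * Q) k i * (M * Q) k i := by
    simp [Matrix.trace, Matrix.diag, Matrix.mul_apply, Matrix.transpose_apply, mul_comm]
  rw [ttr]
  refine Finset.sum_le_sum fun i _ => ?_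
  calc ∑ k, (Z * Q) k i * (M * Q) k i
      ≤ Real.sqrt (∑ k, (Z * Q) k i ^ 2) * Real.sqrt (∑ k, (M * Q) k i ^ 2) :=
        Real.sum_mul_le_sqrt_mul_sqrt _ _ _
    _ ≤ 1 * Real.sqrt (μm M i) := by
        rw [col_M i]
        exact mul_le_mul_of_nonneg_right (Real.sqrt_le_one.mpr (col_Z i)) (Real.sqrt_nonneg _)
    _ = Real.sqrt (μm M i) := one_mul _

end Stmt14Aux

open Stmt14Aux in
/-- Subdifferential-type lower bound for the nuclear norm at Θ = U D Vᵀ. -/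
theorem stmt14 {d1 d2 r : ℕ}
    (U : Matrix (Fin d1) (Fin r) ℝ) (V : Matrix (Fin d2) (Fin r) ℝ) (dv : Fin r → ℝ)
    (hU : Uᵀ * U = 1) (hV : Vᵀ * V = 1) (hdv : ∀ i, 0 < dv i)
    (Θ : Matrix (Fin d1) (Fin d2) ℝ) (hΘ : Θ = U * Matrix.diagonal dv * Vᵀ)
    (PT : Matrix (Fin d1) (Fin d2) ℝ → Matrix (Fin d1) (Fin d2) ℝ)
    (hPT : ∀ N, PT N = U * Uᵀ * N + N * (V * Vᵀ) - U * Uᵀ * N * (V * Vᵀ))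
    (M : Matrix (Fin d1) (Fin d2) ℝ) :
    nuclearNorm (M - PT M) + mip (U * Vᵀ) M ≤ nuclearNorm M := by
  set A := M - PT M with hAdef
  have hA : A = (1 - U * Uᵀ) * M * (1 - V * Vᵀ) := by
    rw [hAdef, hPT]
    simp only [Matrix.sub_mul, Matrix.mul_sub, Matrix.one_mul, Matrix.mul_one, Matrix.mul_assoc]
    abel
  -- A kills U on the left and V on the right
  have hAV : A * V = 0 := by
    have h1 : (1 - V * Vᵀ) * V = 0 := by
      rw [Matrix.sub_mul, Matrix.one_mul, Matrix.mul_assoc, hV, Matrix.mul_one, sub_self]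
    rw [hA, Matrix.mul_assoc, h1, Matrix.mul_zero]
  have hUA : Uᵀ * A = 0 := by
    have h2 : Uᵀ * (1 - U * Uᵀ) = 0 := by
      rw [Matrix.mul_sub, Matrix.mul_one, ← Matrix.mul_assoc, hU, Matrix.one_mul, sub_self]
    rw [hA, ← Matrix.mul_assoc, ← Matrix.mul_assoc, h2, Matrix.zero_mul, Matrix.zero_mul]
  set Q := Qm A with hQdef
  set μ := μm A with hμdef
  have hQ1 : Qᵀ * Q = 1 := Q_orth A
  have hQ2 : Q * Qᵀ = 1 := Q_orth' A
  have hspec : Aᵀ * A = Q * diagonal μ * Qᵀ := spec A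
  have hμ0 : ∀ i, 0 ≤ μ i := μ_nonneg A
  -- the pseudo-inverse scaling function and the rank indicator
  set g : Fin d2 → ℝ := fun i => if μ i = 0 then 0 else (Real.sqrt (μ i))⁻¹ with hgdef
  set h : Fin d2 → ℝ := fun i => if μ i = 0 then 0 else 1 with hhdef
  set N := Q * diagonal g * Qᵀ with hNdef
  set P := Q * diagonal h * Qᵀ with hPdef
  set W := A * N with hWdef
  -- any sandwiched diagonal vanishing where μ ≠ 0 kills V on the right... rather:
  have hfV : ∀ f : Fin d2 → ℝ, (∀ i, μ i = 0 → f i = 0) →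
      (Q * diagonal f * Qᵀ) * V = 0 := by
    intro f hf
    have hAAV : (Q * diagonal μ * Qᵀ) * V = 0 := by
      rw [← hspec, Matrix.mul_assoc, hAV, Matrix.mul_zero]
    have hdμ : diagonal μ * (Qᵀ * V) = 0 := by
      have : Qᵀ * ((Q * diagonal μ * Qᵀ) * V) = 0 := by rw [hAAV, Matrix.mul_zero]
      calc diagonal μ * (Qᵀ * V) = (Qᵀ * Q) * diagonal μ * (Qᵀ * V) := by
            rw [hQ1, Matrix.one_mul]
        _ = Qᵀ * ((Q * diagonal μ * Qᵀ) * V) := by simp only [Matrix.mul_assoc]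
        _ = 0 := this
    have hdf : diagonal f * (Qᵀ * V) = 0 := by
      ext i j
      have hμij : μ i * (Qᵀ * V) i j = 0 := by
        have := congrArg (fun X => X i j) hdμ
        simpa [Matrix.diagonal_mul] using this
      by_cases hc : μ i = 0
      · simp [Matrix.diagonal_mul, hf i hc]
      · have : (Qᵀ * V) i j = 0 := by
          rcases mul_eq_zero.mp hμij with h' | h'
          · exact absurd h' hc
          · exact h'
        simp [Matrix.diagonal_mul, this]
    calc (Q * diagonal f * Qᵀ) * V = Q * (diagonal f * (Qᵀ * V)) := by
          simp only [Matrix.mul_assoc]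
      _ = 0 := by rw [hdf, Matrix.mul_zero]
  have hNV : N * V = 0 := hfV g (fun i hi => by simp [hgdef, hi])
  have hPV : P * V = 0 := hfV h (fun i hi => by simp [hhdef, hi])
  -- symmetry facts
  have hNT : Nᵀ = N := by
    rw [hNdef, Matrix.transpose_mul, Matrix.transpose_mul, Matrix.transpose_transpose,
      Matrix.diagonal_transpose, ← Matrix.mul_assoc]
  have hPT' : Pᵀ = P := by
    rw [hPdef, Matrix.transpose_mul, Matrix.transpose_mul, Matrix.transpose_transpose,
      Matrix.diagonal_transpose, ← Matrix.mul_assoc]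
  have hVP : Vᵀ * P = 0 := by
    have : (P * V)ᵀ = 0 := by rw [hPV, Matrix.transpose_zero]
    rwa [Matrix.transpose_mul, hPT'] at this
  -- Wᵀ expressions
  have hWT : Wᵀ = N * Aᵀ := by rw [hWdef, Matrix.transpose_mul, hNT]
  have hAU : Aᵀ * U = 0 := by
    have : (Uᵀ * A)ᵀ = 0 := by rw [hUA, Matrix.transpose_zero]
    rwa [Matrix.transpose_mul, Matrix.transpose_transpose] at this
  have hWU : Wᵀ * U = 0 := by rw [hWT, Matrix.mul_assoc, hAU, Matrix.mul_zero]
  have hUW : Uᵀ * W = 0 := by rw [hWdef, ← Matrix.mul_assoc, hUA, Matrix.zero_mul]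
  -- W ᵀ W = P
  have hWW : Wᵀ * W = P := by
    rw [hWT, hWdef]
    calc N * Aᵀ * (A * N) = N * (Aᵀ * A) * N := by simp only [Matrix.mul_assoc]
      _ = (Q * diagonal g * Qᵀ) * (Q * diagonal μ * Qᵀ) * (Q * diagonal g * Qᵀ) := by
          rw [hspec, hNdef]
      _ = (Q * diagonal (fun i => g i * μ i) * Qᵀ) * (Q * diagonal g * Qᵀ) := by
          rw [sandwich]
      _ = Q * diagonal (fun i => g i * μ i * g i) * Qᵀ := by rw [sandwich]
      _ = P := by
          rw [hPdef]
          have hfun : (fun i => g i * μ i * g i) = h := by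
            funext i
            by_cases hc : μ i = 0
            · simp [hgdef, hhdef, hc]
            · have hpos : 0 < μ i := lt_of_le_of_ne (hμ0 i) (Ne.symm hc)
              have hs : Real.sqrt (μ i) ≠ 0 := ne_of_gt (Real.sqrt_pos.mpr hpos)
              have hms : Real.sqrt (μ i) * Real.sqrt (μ i) = μ i := Real.mul_self_sqrt (hμ0 i)
              simp only [hgdef, hhdef, if_neg hc]
              rw [← hms]
              field_simp
              rw [Real.sqrt_sq (Real.sqrt_nonneg _)]
          rw [hfun]
  -- trace(Wᵀ A) = nuclearNorm A
  have htrWA : Matrix.trace (Wᵀ * A) = nuclearNorm A := by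
    have e1 : Wᵀ * A = Q * diagonal (fun i => g i * μ i) * Qᵀ := by
      rw [hWT]
      calc N * Aᵀ * A = N * (Aᵀ * A) := by rw [Matrix.mul_assoc]
        _ = (Q * diagonal g * Qᵀ) * (Q * diagonal μ * Qᵀ) := by rw [hspec, hNdef]
        _ = Q * diagonal (fun i => g i * μ i) * Qᵀ := by rw [sandwich]
    rw [e1, Matrix.trace_mul_comm, ← Matrix.mul_assoc, hQ1, Matrix.one_mul,
      Matrix.trace_diagonal, nuclear_eq, ← hμdef]
    refine Finset.sum_congr rfl fun i _ => ?_
    by_cases hc : μ i = 0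
    · simp [hgdef, hc]
    · have hpos : 0 < μ i := lt_of_le_of_ne (hμ0 i) (Ne.symm hc)
      have hs : Real.sqrt (μ i) ≠ 0 := ne_of_gt (Real.sqrt_pos.mpr hpos)
      have hms : Real.sqrt (μ i) * Real.sqrt (μ i) = μ i := Real.mul_self_sqrt (hμ0 i)
      simp only [hgdef, if_neg hc]
      field_simp
      rw [Real.sq_sqrt (hμ0 i)]
  -- trace(Wᵀ M) = trace(Wᵀ A)
  have hWV : W * V = 0 := by rw [hWdef, Matrix.mul_assoc, hNV, Matrix.mul_zero]
  have hVW : Vᵀ * Wᵀ = 0 := by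
    have : (W * V)ᵀ = 0 := by rw [hWV, Matrix.transpose_zero]
    rwa [Matrix.transpose_mul] at this
  have htrWM : Matrix.trace (Wᵀ * M) = Matrix.trace (Wᵀ * A) := by
    have hMA : M - A = PT M := by rw [hAdef]; abel
    have t0 : Wᵀ * (U * Uᵀ * M) = 0 := by
      calc Wᵀ * (U * Uᵀ * M) = (Wᵀ * U) * (Uᵀ * M) := by simp only [Matrix.mul_assoc]
        _ = 0 := by rw [hWU, Matrix.zero_mul]
    have t2 : Wᵀ * (U * Uᵀ * M * (V * Vᵀ)) = 0 := by
      calc Wᵀ * (U * Uᵀ * M * (V * Vᵀ)) = (Wᵀ * U) * (Uᵀ * (M * (V * Vᵀ))) := by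
            simp only [Matrix.mul_assoc]
        _ = 0 := by rw [hWU, Matrix.zero_mul]
    have t1 : Matrix.trace (Wᵀ * (M * (V * Vᵀ))) = 0 := by
      have e : Wᵀ * (M * (V * Vᵀ)) = (Wᵀ * M * V) * Vᵀ := by simp only [Matrix.mul_assoc]
      rw [e, Matrix.trace_mul_comm]
      have e2 : Vᵀ * (Wᵀ * M * V) = (Vᵀ * Wᵀ) * (M * V) := by simp only [Matrix.mul_assoc]
      rw [e2, hVW, Matrix.zero_mul, Matrix.trace_zero]
    have hdd : Matrix.trace (Wᵀ * M) - Matrix.trace (Wᵀ * A) = Matrix.trace (Wᵀ * PT M) := by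
      rw [← Matrix.trace_sub, ← Matrix.mul_sub, hMA]
    have hz : Matrix.trace (Wᵀ * PT M) = 0 := by
      rw [hPT, Matrix.mul_sub, Matrix.mul_add, t0, t2]
      simpa using t1
    linarith
  -- Z = U Vᵀ + W is a subgradient witness
  set Z := U * Vᵀ + W with hZdef
  have hZZ : Zᵀ * Z = V * Vᵀ + P := by
    rw [hZdef, Matrix.transpose_add, Matrix.transpose_mul, Matrix.transpose_transpose]
    rw [Matrix.add_mul, Matrix.mul_add, Matrix.mul_add]
    have e1 : V * Uᵀ * (U * Vᵀ) = V * Vᵀ := by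
      calc V * Uᵀ * (U * Vᵀ) = V * (Uᵀ * U) * Vᵀ := by simp only [Matrix.mul_assoc]
        _ = V * Vᵀ := by rw [hU, Matrix.mul_one]
    have e2 : V * Uᵀ * W = 0 := by
      rw [Matrix.mul_assoc, hUW, Matrix.mul_zero]
    have e3 : Wᵀ * (U * Vᵀ) = 0 := by
      rw [← Matrix.mul_assoc, hWU, Matrix.zero_mul]
    rw [e1, e2, e3, hWW]
    abel
  have hBpsd : (1 - Zᵀ * Z).PosSemidef := by
    set B : Matrix (Fin d2) (Fin d2) ℝ := 1 - V * Vᵀ - P with hBdef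
    have hB : 1 - Zᵀ * Z = B := by rw [hZZ, hBdef]; abel
    have hBT : Bᵀ = B := by
      rw [hBdef, Matrix.transpose_sub, Matrix.transpose_sub, Matrix.transpose_one,
        Matrix.transpose_mul, Matrix.transpose_transpose, hPT']
    have hVVP : (V * Vᵀ) * P = 0 := by
      rw [Matrix.mul_assoc, hVP, Matrix.mul_zero]
    have hPVV : P * (V * Vᵀ) = 0 := by
      rw [← Matrix.mul_assoc, hPV, Matrix.zero_mul]
    have hVV2 : (V * Vᵀ) * (V * Vᵀ) = V * Vᵀ := by
      calc (V * Vᵀ) * (V * Vᵀ) = V * (Vᵀ * V) * Vᵀ := by simp only [Matrix.mul_assoc]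
        _ = V * Vᵀ := by rw [hV, Matrix.mul_one]
    have hPP : P * P = P := by
      rw [hPdef, sandwich]
      have hfun : (fun i => h i * h i) = h := by
        funext i
        by_cases hc : μ i = 0 <;> simp [hhdef, hc]
      rw [hfun]
    have hBB : B * B = B := by
      rw [hBdef]
      simp only [Matrix.sub_mul, Matrix.mul_sub, Matrix.one_mul, Matrix.mul_one,
        hVVP, hPVV, hVV2, hPP]
      abel
    have : B = Bᵀ * B := by rw [hBT, hBB]
    rw [hB, this]
    have := Matrix.posSemidef_conjTranspose_mul_self B
    simpa [conjTranspose_eq_transpose_of_trivial] using this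
  -- conclude
  have hfinal := dual_bound Z M hBpsd
  have hsplit : Matrix.trace (Zᵀ * M) = mip (U * Vᵀ) M + Matrix.trace (Wᵀ * M) := by
    rw [hZdef, Matrix.transpose_add, Matrix.add_mul, Matrix.trace_add]
    rfl
  rw [hsplit, htrWM, htrWA] at hfinal
  linarith
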